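/- Let μ₁, μ₂ > 1 + D for some D > 0, and suppose X > 0 and Y > 0 are related by X = ((1 − 1/μ₂)·(Y + 1/μ₁)) / ((1 − 1/μ₁)·(1 + Y/μ₂)). Then (D/(1+D))·(Y/(1+Y)) < X < (1 + 1/D)·(1 + Y). -/

import Mathlib

set_option maxHeartbeats 1000000 in
theorem stmt_6 (D mu1 mu2 X Y : ℝ) (hD : 0 < D)
    (h1 : 1 + D < mu1) (h2 : 1 + D < mu2) (hX : 0 < X) (hY : 0 < Y)
    (hrel : X = ((1 - 1 / mu2) * (Y + 1 / mu1)) / ((1 - 1 / mu1) * (1 + Y / mu2))) :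
    (D / (1 + D)) * (Y / (1 + Y)) < X ∧ X < (1 + 1 / D) * (1 + Y) := by
  have hm1 : (0:ℝ) < mu1 := by linarith
  have hm2 : (0:ℝ) < mu2 := by linarith
  have ha : 0 < 1 - 1/mu1 := by
    have : 1/mu1 < 1 := by rw [div_lt_one hm1]; linarith
    linarith
  have hb : 0 < 1 + Y/mu2 := by positivity
  have hden : 0 < (1 - 1/mu1) * (1 + Y/mu2) := mul_pos ha hb
  have h1D : (0:ℝ) < 1 + D := by linarith
  have h1Y : (0:ℝ) < 1 + Y := by linarith
  have e1 : 1/mu1 < 1/(1+D) := one_div_lt_one_div_of_lt h1D h1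
  have e2 : 1/mu2 < 1/(1+D) := one_div_lt_one_div_of_lt h1D h2
  have f1 : 0 < 1/mu1 := by positivity
  have f2 : 0 < 1/mu2 := by positivity
  have hDfrac : 1 - 1/(1+D) = D/(1+D) := by field_simp; ring
  have hD2 : D/(1+D) < 1 - 1/mu2 := by linarith
  have hD1 : D/(1+D) < 1 - 1/mu1 := by linarith
  have hfr : 0 < D/(1+D) := by positivity
  subst hrel
  constructor
  · rw [lt_div_iff₀ hden]
    have L1 : (Y/(1+Y))*(1+Y/mu2) < Y := by
      have hYm : Y/mu2 < Y := by rw [div_lt_iff₀ hm2]; nlinarith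
      have h := mul_lt_mul_of_pos_left (by linarith : 1 + Y/mu2 < 1 + Y)
        (by positivity : (0:ℝ) < Y/(1+Y))
      have h2' : Y/(1+Y)*(1+Y) = Y := div_mul_cancel₀ Y (by linarith)
      nlinarith
    calc D / (1 + D) * (Y / (1 + Y)) * ((1 - 1 / mu1) * (1 + Y / mu2))
        ≤ D / (1 + D) * ((Y / (1 + Y)) * (1 + Y / mu2)) := by
          nlinarith [mul_pos (by positivity : (0:ℝ) < Y/(1+Y)) hb, mul_pos hfr (mul_pos (by positivity : (0:ℝ) < Y/(1+Y)) hb)]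
      _ < D / (1 + D) * Y := by nlinarith
      _ < (1 - 1/mu2) * Y := by nlinarith
      _ < (1 - 1 / mu2) * (Y + 1 / mu1) := by nlinarith
  · rw [div_lt_iff₀ hden]
    have hb1 : (1:ℝ) < 1 + Y/mu2 := by nlinarith [div_pos hY hm2]
    have key : (1:ℝ) < (1 + 1/D) * (1-1/mu1) := by
      have h1d : (1+1/D) * (D/(1+D)) = 1 := by field_simp; ring
      nlinarith [mul_lt_mul_of_pos_left hD1 (by positivity : (0:ℝ) < 1+1/D)]
    have hmu1lt : 1/mu1 < 1 := by rw [div_lt_one hm1]; linarith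
    have num : (1 - 1/mu2) * (Y + 1/mu1) < 1 + Y := by
      calc (1 - 1/mu2) * (Y + 1/mu1) < 1 * (Y + 1/mu1) :=
            mul_lt_mul_of_pos_right (by linarith) (by positivity)
        _ = Y + 1/mu1 := one_mul _
        _ < 1 + Y := by linarith
    calc (1 - 1/mu2) * (Y + 1/mu1) < 1 + Y := num
      _ = (1+Y) * 1 := by ring
      _ < (1+Y) * ((1 + 1/D) * ((1-1/mu1)*(1+Y/mu2))) := by
          have hp : 0 < (1+1/D)*(1-1/mu1) := mul_pos (by positivity) ha
          have inner : (1:ℝ) < (1+1/D)*((1-1/mu1)*(1+Y/mu2)) := by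
            calc (1:ℝ) < (1+1/D)*(1-1/mu1) := key
              _ = (1+1/D)*(1-1/mu1)*1 := by ring
              _ ≤ (1+1/D)*(1-1/mu1)*(1+Y/mu2) := by nlinarith
              _ = (1+1/D)*((1-1/mu1)*(1+Y/mu2)) := by ring
          exact mul_lt_mul_of_pos_left inner h1Y
      _ = (1 + 1/D) * (1+Y) * ((1-1/mu1)*(1+Y/mu2)) := by ring
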